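/- Let l be an odd prime, let q be an integer not divisible by l, and suppose that the multiplicative order e of −q modulo l is odd. Let λ ⊆ μ be partitions such that μ is obtained from λ by adding an e-hook, let (r,c) be an addable corner of λ such that the cells (r,c), (r+1,c), (r,c+1) all lie in the Young diagram of μ and (r+1,c+1) is an addable corner of μ. Let λ̄ be λ with the cell (r,c) added and μ̄ be μ with the cell (r+1,c+1) added. Then R_λ · R_{μ̄} = R_{λ̄} · R_μ in ℤ/lℤ. -/

import Mathlib

/-- `f` encodes a partition `λ` via its parts `λ_i = f i` for `i ≥ 1` (and `f 0 = 0`):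
the parts are weakly decreasing and eventually zero. -/
def IsPartition (f : ℕ → ℕ) : Prop :=
  f 0 = 0 ∧ (∀ i, 1 ≤ i → f (i + 1) ≤ f i) ∧ ∃ N, ∀ i, N ≤ i → f i = 0

/-- The conjugate partition: `conjP f j = #{i ≥ 1 | f i ≥ j}`. -/
noncomputable def conjP (f : ℕ → ℕ) (j : ℕ) : ℕ :=
  Set.ncard {i : ℕ | 1 ≤ i ∧ j ≤ f i}

/-- The size `|λ| = Σ_i λ_i` of the partition. -/
noncomputable def wtP (f : ℕ → ℕ) : ℕ := ∑ᶠ i, f i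

/-- `d_λ = Σ_i (λ'_i)² − Σ_i i·λ_i`. -/
noncomputable def dP (f : ℕ → ℕ) : ℤ :=
  (∑ᶠ i : ℕ, (conjP f i : ℤ) ^ 2) - ∑ᶠ i : ℕ, (i : ℤ) * (f i : ℤ)

/-- The multiset of hook lengths of the partition: for each cell `(i,j)` of the Young
diagram (`1 ≤ i`, `1 ≤ j ≤ λ_i`) the hook length `λ_i − j + λ'_j − i + 1`. -/
noncomputable def hooksP (f : ℕ → ℕ) : Multiset ℤ :=
  (((Finset.Icc 1 (conjP f 1)) ×ˢ (Finset.Icc 1 (f 1))).filter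
      (fun p => p.2 ≤ f p.1)).val.map
    (fun p => (f p.1 : ℤ) - (p.2 : ℤ) + (conjP f p.2 : ℤ) - (p.1 : ℤ) + 1)

/-- `R_λ = (−q)^{d_λ} · ∏_{i=1}^{|λ|} ((−q)^i + 1) · (∏_{h ∈ hooks(λ)} ((−q)^h + 1))⁻¹`
computed in the field `ℤ/lℤ`. -/
noncomputable def RP (l : ℕ) [Fact l.Prime] (q : ℤ) (f : ℕ → ℕ) : ZMod l :=
  ((-q : ℤ) : ZMod l) ^ dP f *
    (∏ i ∈ Finset.Icc 1 (wtP f), (((-q : ℤ) : ZMod l) ^ i + 1)) *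
    (((hooksP f).map (fun h => ((-q : ℤ) : ZMod l) ^ h + 1)).prod)⁻¹

def InDiagram (f : ℕ → ℕ) (p : ℕ × ℕ) : Prop :=
  1 ≤ p.1 ∧ 1 ≤ p.2 ∧ p.2 ≤ f p.1

/-- Two cells are edge-adjacent. -/
def AdjCell (p q : ℕ × ℕ) : Prop :=
  (p.1 = q.1 ∧ (p.2 + 1 = q.2 ∨ q.2 + 1 = p.2)) ∨
  (p.2 = q.2 ∧ (p.1 + 1 = q.1 ∨ q.1 + 1 = p.1))

/-- `μ = g` is obtained from `λ = f` by adding an `e`-hook: the diagram of `f` is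
contained in that of `g`, `|g| = |f| + e`, and the skew diagram `g ∖ f` is a rim hook
(connected through edge-adjacent cells and containing no 2×2 square of cells). -/
def AddsEHook (e : ℕ) (f g : ℕ → ℕ) : Prop :=
  (∀ i, f i ≤ g i) ∧ wtP g = wtP f + e ∧
  (∀ p q : ℕ × ℕ,
      (InDiagram g p ∧ ¬ InDiagram f p) → (InDiagram g q ∧ ¬ InDiagram f q) →
      Relation.ReflTransGen
        (fun a b => (InDiagram g a ∧ ¬ InDiagram f a) ∧
          (InDiagram g b ∧ ¬ InDiagram f b) ∧ AdjCell a b) p q) ∧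
  ¬ ∃ i j : ℕ,
      (InDiagram g (i, j) ∧ ¬ InDiagram f (i, j)) ∧
      (InDiagram g (i + 1, j) ∧ ¬ InDiagram f (i + 1, j)) ∧
      (InDiagram g (i, j + 1) ∧ ¬ InDiagram f (i, j + 1)) ∧
      (InDiagram g (i + 1, j + 1) ∧ ¬ InDiagram f (i + 1, j + 1))


theorem nat_Icc_ncard (a b : ℕ) : (Set.Icc a b).ncard = b + 1 - a := by
  rw [← Finset.coe_Icc, Set.ncard_coe_finset, Nat.card_Icc]

theorem down_eq_Icc (S : Set ℕ) (hfin : S.Finite) (h1 : ∀ i ∈ S, 1 ≤ i)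
    (hdc : ∀ i ∈ S, ∀ i', 1 ≤ i' → i' ≤ i → i' ∈ S) : S = Set.Icc 1 S.ncard := by
  rcases Set.eq_empty_or_nonempty S with h | h
  · rw [h, Set.ncard_empty]
    ext i; simp [Set.mem_Icc]
  · have hne : hfin.toFinset.Nonempty := by rwa [Set.Finite.toFinset_nonempty]
    set k := hfin.toFinset.max' hne with hk
    have hSk : S = Set.Icc 1 k := by
      ext i
      constructor
      · intro hi
        exact ⟨h1 i hi, Finset.le_max' _ i (hfin.mem_toFinset.mpr hi)⟩
      · rintro ⟨hi1, hik⟩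
        have hkS : k ∈ S := hfin.mem_toFinset.mp (hfin.toFinset.max'_mem hne)
        exact hdc k hkS i hi1 hik
    rw [hSk, nat_Icc_ncard]; norm_num

theorem part_mono {f : ℕ → ℕ} (hf : IsPartition f) {a b : ℕ} (ha : 1 ≤ a) (hab : a ≤ b) :
    f b ≤ f a := by
  induction b with
  | zero => omega
  | succ n ih =>
    rcases Nat.lt_or_ge a (n+1) with h | h
    · have h1 : 1 ≤ n := by omega
      exact le_trans (hf.2.1 n h1) (ih (by omega))
    · have : a = n + 1 := by omega
      subst this; exact le_rfl

theorem conj_set_finite {f : ℕ → ℕ} (hf : IsPartition f) {j : ℕ} (hj : 1 ≤ j) :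
    {i : ℕ | 1 ≤ i ∧ j ≤ f i}.Finite := by
  obtain ⟨N, hN⟩ := hf.2.2
  apply Set.Finite.subset (Set.finite_Icc 1 N)
  rintro i ⟨hi1, hij⟩
  refine ⟨hi1, ?_⟩
  by_contra h
  have : f i = 0 := hN i (by omega)
  omega

theorem conj_set_eq {f : ℕ → ℕ} (hf : IsPartition f) {j : ℕ} (hj : 1 ≤ j) :
    {i : ℕ | 1 ≤ i ∧ j ≤ f i} = Set.Icc 1 (conjP f j) := by
  apply down_eq_Icc _ (conj_set_finite hf hj)
  · rintro i ⟨hi1, _⟩; exact hi1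
  · rintro i ⟨hi1, hij⟩ i' hi'1 hi'i
    exact ⟨hi'1, le_trans hij (part_mono hf hi'1 hi'i)⟩

theorem le_conjP_iff {f : ℕ → ℕ} (hf : IsPartition f) {i j : ℕ} (hi : 1 ≤ i) (hj : 1 ≤ j) :
    j ≤ f i ↔ i ≤ conjP f j := by
  have h := conj_set_eq hf hj
  constructor
  · intro hji
    have : i ∈ {i : ℕ | 1 ≤ i ∧ j ≤ f i} := ⟨hi, hji⟩
    rw [h] at this
    exact this.2
  · intro hic
    have : i ∈ Set.Icc 1 (conjP f j) := ⟨hi, hic⟩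
    rw [← h] at this
    exact this.2

theorem conjP_zero (f : ℕ → ℕ) : conjP f 0 = 0 := by
  unfold conjP
  have : {i : ℕ | 1 ≤ i ∧ 0 ≤ f i} = Set.Ici 1 := by
    ext i; simp
  rw [this]
  exact Set.Infinite.ncard (Set.Ici_infinite 1)

theorem conjP_eq_zero {f : ℕ → ℕ} (hf : IsPartition f) {j : ℕ} (hj : f 1 < j) :
    conjP f j = 0 := by
  unfold conjP
  convert Set.ncard_empty ℕ
  ext i
  simp only [Set.mem_setOf_eq, Set.mem_empty_iff_false, iff_false, not_and]
  intro hi1 hji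
  exact absurd (le_trans hji (part_mono hf le_rfl hi1)) (by omega)

theorem conjP_anti {f : ℕ → ℕ} (hf : IsPartition f) {j j' : ℕ} (hj : 1 ≤ j) (hjj' : j ≤ j') :
    conjP f j' ≤ conjP f j := by
  rcases Nat.eq_zero_or_pos (conjP f j') with h | h
  · omega
  · have hj' : 1 ≤ j' := by omega
    have := (le_conjP_iff hf h hj').mpr le_rfl
    exact (le_conjP_iff hf h hj).mp (le_trans hjj' this)

section AddBox

variable {f fb : ℕ → ℕ} {a b : ℕ}

theorem addbox_val (hb : 1 ≤ b) (hfa : f a = b - 1)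
    (hfb : ∀ i, fb i = if i = a then f i + 1 else f i) : fb a = b := by
  rw [hfb a, if_pos rfl, hfa]; omega

theorem addbox_part (hf : IsPartition f) (ha : 1 ≤ a) (hb : 1 ≤ b)
    (hfa : f a = b - 1) (hconj : conjP f b = a - 1)
    (hfb : ∀ i, fb i = if i = a then f i + 1 else f i) : IsPartition fb := by
  refine ⟨?_, ?_, ?_⟩
  · rw [hfb 0, if_neg (by omega), hf.1]
  · intro i hi
    rcases eq_or_ne (i + 1) a with h | h
    · rw [hfb (i+1), if_pos h, hfb i, if_neg (by omega)]
      have hia : i = a - 1 := by omega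
      have : b ≤ f i := by
        rw [le_conjP_iff hf hi hb, hconj]; omega
      have := hf.2.1 i hi
      rw [← h] at hfa
      omega
    · rcases eq_or_ne i a with h' | h'
      · rw [hfb (i+1), if_neg h, hfb i, if_pos h']
        have := hf.2.1 i hi
        omega
      · rw [hfb (i+1), if_neg h, hfb i, if_neg h']
        exact hf.2.1 i hi
  · obtain ⟨N, hN⟩ := hf.2.2
    refine ⟨N + a + 1, fun i hi => ?_⟩
    rw [hfb i, if_neg (by omega)]
    exact hN i (by omega)

theorem addbox_conjP (hf : IsPartition f) (ha : 1 ≤ a) (hb : 1 ≤ b)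
    (hfa : f a = b - 1) (hconj : conjP f b = a - 1)
    (hfb : ∀ i, fb i = if i = a then f i + 1 else f i) (j : ℕ) :
    conjP fb j = if j = b then a else conjP f j := by
  rcases Nat.eq_zero_or_pos j with hj | hj
  · subst hj
    rw [if_neg (by omega), conjP_zero, conjP_zero]
  · rcases eq_or_ne j b with hjb | hjb
    · subst hjb
      rw [if_pos rfl]
      unfold conjP
      have hset : {i : ℕ | 1 ≤ i ∧ j ≤ fb i} = Set.Icc 1 a := by
        ext i
        simp only [Set.mem_setOf_eq, Set.mem_Icc]
        constructor
        · rintro ⟨hi1, hjfb⟩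
          refine ⟨hi1, ?_⟩
          rcases eq_or_ne i a with h | h
          · omega
          · rw [hfb i, if_neg h] at hjfb
            have := (le_conjP_iff hf hi1 hj).mp hjfb
            omega
        · rintro ⟨hi1, hia⟩
          refine ⟨hi1, ?_⟩
          rcases eq_or_ne i a with h | h
          · subst h
            rw [addbox_val hj hfa hfb]
          · rw [hfb i, if_neg h]
            rw [le_conjP_iff hf hi1 hj, hconj]
            omega
      rw [hset, nat_Icc_ncard]
      omega
    · rw [if_neg hjb]
      unfold conjP
      congr 1
      ext i
      simp only [Set.mem_setOf_eq]
      rcases eq_or_ne i a with h | h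
      · subst h
        rw [hfb i, if_pos rfl]
        omega
      · rw [hfb i, if_neg h]

end AddBox

theorem wtP_eq_sum {f : ℕ → ℕ} {N : ℕ} (hN : ∀ i, N ≤ i → f i = 0) :
    wtP f = ∑ i ∈ Finset.range N, f i := by
  apply finsum_eq_sum_of_support_subset
  intro i hi
  simp only [Function.mem_support] at hi
  simp only [Finset.coe_range, Set.mem_Iio]
  by_contra h
  exact hi (hN i (by omega))

theorem conjP_sq_support {f : ℕ → ℕ} (hf : IsPartition f) :
    (Function.support fun i => (conjP f i : ℤ) ^ 2) ⊆ ↑(Finset.range (f 1 + 1)) := by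
  intro i hi
  simp only [Function.mem_support] at hi
  simp only [Finset.coe_range, Set.mem_Iio]
  by_contra h
  have : conjP f i = 0 := conjP_eq_zero hf (by omega)
  rw [this] at hi
  simp at hi

theorem rowsum_support {f : ℕ → ℕ} {N : ℕ} (hN : ∀ i, N ≤ i → f i = 0) :
    (Function.support fun i : ℕ => (i : ℤ) * (f i : ℤ)) ⊆ ↑(Finset.range N) := by
  intro i hi
  simp only [Function.mem_support] at hi
  simp only [Finset.coe_range, Set.mem_Iio]
  by_contra h
  rw [hN i (by omega)] at hi
  simp at hi

section AddBoxSums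

variable {f fb : ℕ → ℕ} {a b : ℕ}

theorem addbox_wtP (hf : IsPartition f) (ha : 1 ≤ a) (hb : 1 ≤ b)
    (hfa : f a = b - 1)
    (hfb : ∀ i, fb i = if i = a then f i + 1 else f i) : wtP fb = wtP f + 1 := by
  obtain ⟨N, hN⟩ := hf.2.2
  set M := N + a + 1 with hM
  have hNf : ∀ i, M ≤ i → f i = 0 := fun i hi => hN i (by omega)
  have hNfb : ∀ i, M ≤ i → fb i = 0 := by
    intro i hi
    rw [hfb i, if_neg (by omega)]
    exact hN i (by omega)
  rw [wtP_eq_sum hNf, wtP_eq_sum hNfb]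
  have : ∀ i, fb i = f i + (if i = a then 1 else 0) := by
    intro i
    rw [hfb i]
    split <;> omega
  rw [Finset.sum_congr rfl (fun i _ => this i), Finset.sum_add_distrib,
    Finset.sum_ite_eq' (Finset.range M) a (fun _ => 1),
    if_pos (Finset.mem_range.mpr (by omega))]

theorem addbox_dP (hf : IsPartition f) (ha : 1 ≤ a) (hb : 1 ≤ b)
    (hfa : f a = b - 1) (hconj : conjP f b = a - 1)
    (hfb : ∀ i, fb i = if i = a then f i + 1 else f i) : dP fb = dP f + (a : ℤ) - 1 := by
  obtain ⟨N, hN⟩ := hf.2.2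
  set M := N + a + b + f 1 + 2 with hM
  have hNf : ∀ i, M ≤ i → f i = 0 := fun i hi => hN i (by omega)
  have hNfb : ∀ i, M ≤ i → fb i = 0 := by
    intro i hi
    rw [hfb i, if_neg (by omega)]
    exact hN i (by omega)
  have hfb1 : fb 1 ≤ f 1 + 1 := by
    rw [hfb 1]; split <;> omega
  have hcfb := addbox_conjP hf ha hb hfa hconj hfb
  have h1 : (∑ᶠ i : ℕ, (conjP fb i : ℤ) ^ 2) = ∑ i ∈ Finset.range M, (conjP fb i : ℤ) ^ 2 := by
    apply finsum_eq_sum_of_support_subset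
    refine subset_trans (conjP_sq_support (addbox_part hf ha hb hfa hconj hfb)) ?_
    simp only [Finset.coe_range]
    intro x hx
    simp only [Set.mem_Iio] at hx ⊢
    omega
  have h2 : (∑ᶠ i : ℕ, (conjP f i : ℤ) ^ 2) = ∑ i ∈ Finset.range M, (conjP f i : ℤ) ^ 2 := by
    apply finsum_eq_sum_of_support_subset
    refine subset_trans (conjP_sq_support hf) ?_
    simp only [Finset.coe_range]
    intro x hx
    simp only [Set.mem_Iio] at hx ⊢
    omega
  have h3 : (∑ᶠ i : ℕ, (i : ℤ) * (fb i : ℤ)) = ∑ i ∈ Finset.range M, (i : ℤ) * (fb i : ℤ) :=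
    finsum_eq_sum_of_support_subset _ (rowsum_support hNfb)
  have h4 : (∑ᶠ i : ℕ, (i : ℤ) * (f i : ℤ)) = ∑ i ∈ Finset.range M, (i : ℤ) * (f i : ℤ) :=
    finsum_eq_sum_of_support_subset _ (rowsum_support hNf)
  unfold dP
  rw [h1, h2, h3, h4]
  have e1 : ∑ i ∈ Finset.range M, (conjP fb i : ℤ) ^ 2
      = (∑ i ∈ Finset.range M, (conjP f i : ℤ) ^ 2) + (2 * (a : ℤ) - 1) := by
    have : ∀ i ∈ Finset.range M, (conjP fb i : ℤ) ^ 2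
        = (conjP f i : ℤ) ^ 2 + (if i = b then 2 * (a : ℤ) - 1 else 0) := by
      intro i _
      rw [hcfb i]
      rcases eq_or_ne i b with h | h
      · subst h
        rw [if_pos rfl, if_pos rfl, hconj]
        have : ((a - 1 : ℕ) : ℤ) = (a : ℤ) - 1 := by omega
        rw [this]
        ring
      · rw [if_neg h, if_neg h, add_zero]
    rw [Finset.sum_congr rfl this, Finset.sum_add_distrib,
      Finset.sum_ite_eq' (Finset.range M) b (fun _ => 2 * (a:ℤ) - 1),
      if_pos (Finset.mem_range.mpr (by omega))]
  have e2 : ∑ i ∈ Finset.range M, (i : ℤ) * (fb i : ℤ)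
      = (∑ i ∈ Finset.range M, (i : ℤ) * (f i : ℤ)) + (a : ℤ) := by
    have : ∀ i ∈ Finset.range M, (i : ℤ) * (fb i : ℤ)
        = (i : ℤ) * (f i : ℤ) + (if i = a then (a : ℤ) else 0) := by
      intro i _
      rw [hfb i]
      rcases eq_or_ne i a with h | h
      · subst h
        rw [if_pos rfl, if_pos rfl]
        push_cast
        ring
      · rw [if_neg h, if_neg h, add_zero]
    rw [Finset.sum_congr rfl this, Finset.sum_add_distrib,
      Finset.sum_ite_eq' (Finset.range M) a (fun _ => (a:ℤ)),
      if_pos (Finset.mem_range.mpr (by omega))]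
  rw [e1, e2]
  ring

end AddBoxSums

noncomputable def cellsF (f : ℕ → ℕ) : Finset (ℕ × ℕ) :=
  ((Finset.Icc 1 (conjP f 1)) ×ˢ (Finset.Icc 1 (f 1))).filter (fun p => p.2 ≤ f p.1)

noncomputable def hkZ (f : ℕ → ℕ) (p : ℕ × ℕ) : ℤ :=
  (f p.1 : ℤ) - (p.2 : ℤ) + (conjP f p.2 : ℤ) - (p.1 : ℤ) + 1

theorem hooks_map_prod {M : Type*} [CommMonoid M] (f : ℕ → ℕ) (F : ℤ → M) :
    ((hooksP f).map F).prod = ∏ p ∈ cellsF f, F (hkZ f p) := by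
  rw [Finset.prod]
  rw [hooksP, Multiset.map_map]
  rfl

theorem mem_cellsF {f : ℕ → ℕ} (hf : IsPartition f) {p : ℕ × ℕ} :
    p ∈ cellsF f ↔ 1 ≤ p.1 ∧ 1 ≤ p.2 ∧ p.2 ≤ f p.1 := by
  unfold cellsF
  rw [Finset.mem_filter, Finset.mem_product, Finset.mem_Icc, Finset.mem_Icc]
  constructor
  · rintro ⟨⟨⟨h1, _⟩, ⟨h2, _⟩⟩, h3⟩
    exact ⟨h1, h2, h3⟩
  · rintro ⟨h1, h2, h3⟩
    refine ⟨⟨⟨h1, ?_⟩, ⟨h2, ?_⟩⟩, h3⟩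
    · exact (le_conjP_iff hf h1 le_rfl).mp (by omega)
    · exact le_trans h3 (part_mono hf le_rfl h1)

section AddBoxCells

variable {M : Type*} [CommMonoid M] {f fb : ℕ → ℕ} {a b : ℕ}

theorem addbox_cellsF (hf : IsPartition f) (ha : 1 ≤ a) (hb : 1 ≤ b)
    (hfa : f a = b - 1) (hconj : conjP f b = a - 1)
    (hfb : ∀ i, fb i = if i = a then f i + 1 else f i) :
    cellsF fb = insert (a, b) (cellsF f) := by
  have hpart := addbox_part hf ha hb hfa hconj hfb
  ext p
  rw [mem_cellsF hpart, Finset.mem_insert, mem_cellsF hf]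
  constructor
  · rintro ⟨h1, h2, h3⟩
    rcases eq_or_ne p.1 a with h | h
    · rw [hfb p.1, if_pos h] at h3
      rw [h] at h3
      rcases eq_or_ne p.2 b with h' | h'
      · left
        rw [← h, ← h']
      · right
        refine ⟨h1, h2, ?_⟩
        rw [h]
        omega
    · rw [hfb p.1, if_neg h] at h3
      exact Or.inr ⟨h1, h2, h3⟩
  · rintro (h | ⟨h1, h2, h3⟩)
    · subst h
      refine ⟨ha, hb, ?_⟩
      simp only
      rw [addbox_val hb hfa hfb]
    · refine ⟨h1, h2, ?_⟩
      rw [hfb p.1]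
      split <;> omega

theorem not_mem_cellsF (hf : IsPartition f) (hb : 1 ≤ b) (hfa : f a = b - 1) :
    (a, b) ∉ cellsF f := by
  rw [mem_cellsF hf]
  rintro ⟨_, _, h3⟩
  simp only at h3
  omega

theorem addbox_hkZ (hf : IsPartition f) (ha : 1 ≤ a) (hb : 1 ≤ b)
    (hfa : f a = b - 1) (hconj : conjP f b = a - 1)
    (hfb : ∀ i, fb i = if i = a then f i + 1 else f i) (p : ℕ × ℕ) :
    hkZ fb p = hkZ f p + (if p.1 = a then 1 else 0) + (if p.2 = b then 1 else 0) := by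
  have hcfb := addbox_conjP hf ha hb hfa hconj hfb
  unfold hkZ
  rw [hfb p.1, hcfb p.2]
  rcases eq_or_ne p.1 a with h | h <;> rcases eq_or_ne p.2 b with h' | h' <;>
    simp only [h, h', if_pos, if_neg, ite_true, ite_false] <;> push_cast <;>
      first
        | (rw [if_pos rfl]; push_cast; rw [hconj]; push_cast; omega)
        | omega

theorem addbox_hkZ_corner (hf : IsPartition f) (ha : 1 ≤ a) (hb : 1 ≤ b)
    (hfa : f a = b - 1) (hconj : conjP f b = a - 1)
    (hfb : ∀ i, fb i = if i = a then f i + 1 else f i) :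
    hkZ fb (a, b) = 1 := by
  have hcfb := addbox_conjP hf ha hb hfa hconj hfb
  unfold hkZ
  simp only
  rw [addbox_val hb hfa hfb, hcfb b, if_pos rfl]
  push_cast
  ring

end AddBoxCells

section RowCol

variable {M : Type*} [CommMonoid M] {f : ℕ → ℕ} {a b : ℕ}

theorem row_filter_eq (hf : IsPartition f) (ha : 1 ≤ a) :
    (cellsF f).filter (fun p => p.1 = a) = (Finset.Icc 1 (f a)).image (fun j => (a, j)) := by
  ext p
  rw [Finset.mem_filter, mem_cellsF hf, Finset.mem_image]
  constructor
  · rintro ⟨⟨h1, h2, h3⟩, h4⟩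
    exact ⟨p.2, Finset.mem_Icc.mpr ⟨h2, h4 ▸ h3⟩, by rw [← h4]⟩
  · rintro ⟨j, hj, hp⟩
    rw [Finset.mem_Icc] at hj
    subst hp
    exact ⟨⟨ha, hj.1, hj.2⟩, rfl⟩

theorem row_prod (hf : IsPartition f) (ha : 1 ≤ a) (G : ℕ × ℕ → M) :
    ∏ p ∈ (cellsF f).filter (fun p => p.1 = a), G p = ∏ j ∈ Finset.Icc 1 (f a), G (a, j) := by
  rw [row_filter_eq hf ha, Finset.prod_image]
  intro x _ y _ h
  simpa using h

theorem col_filter_eq (hf : IsPartition f) (hb : 1 ≤ b) (hfa : f a = b - 1)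
    (hconj : conjP f b = a - 1) :
    ((cellsF f).filter (fun p => ¬ p.1 = a)).filter (fun p => p.2 = b)
      = (Finset.Icc 1 (conjP f b)).image (fun i => (i, b)) := by
  ext p
  rw [Finset.mem_filter, Finset.mem_filter, mem_cellsF hf, Finset.mem_image]
  constructor
  · rintro ⟨⟨⟨h1, h2, h3⟩, _⟩, h5⟩
    refine ⟨p.1, Finset.mem_Icc.mpr ⟨h1, ?_⟩, by rw [← h5]⟩
    exact (le_conjP_iff hf h1 hb).mp (h5 ▸ h3)
  · rintro ⟨i, hi, hp⟩
    rw [Finset.mem_Icc] at hi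
    subst hp
    have h3 : b ≤ f i := (le_conjP_iff hf hi.1 hb).mpr hi.2
    refine ⟨⟨⟨hi.1, hb, h3⟩, ?_⟩, rfl⟩
    simp only
    omega

theorem col_prod (hf : IsPartition f) (hb : 1 ≤ b) (hfa : f a = b - 1)
    (hconj : conjP f b = a - 1) (G : ℕ × ℕ → M) :
    ∏ p ∈ ((cellsF f).filter (fun p => ¬ p.1 = a)).filter (fun p => p.2 = b), G p
      = ∏ i ∈ Finset.Icc 1 (conjP f b), G (i, b) := by
  rw [col_filter_eq hf hb hfa hconj, Finset.prod_image]
  intro x _ y _ h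
  simpa using h

theorem addbox_Hprod {fb : ℕ → ℕ} (hf : IsPartition f) (ha : 1 ≤ a) (hb : 1 ≤ b)
    (hfa : f a = b - 1) (hconj : conjP f b = a - 1)
    (hfb : ∀ i, fb i = if i = a then f i + 1 else f i) (F : ℤ → M) :
    (∏ p ∈ cellsF fb, F (hkZ fb p)) *
      ((∏ j ∈ Finset.Icc 1 (f a), F (hkZ f (a, j))) *
        (∏ i ∈ Finset.Icc 1 (conjP f b), F (hkZ f (i, b))))
    = F 1 * (∏ p ∈ cellsF f, F (hkZ f p)) *
      ((∏ j ∈ Finset.Icc 1 (f a), F (hkZ f (a, j) + 1)) *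
        (∏ i ∈ Finset.Icc 1 (conjP f b), F (hkZ f (i, b) + 1))) := by
  have hins : cellsF fb = insert (a, b) (cellsF f) := addbox_cellsF hf ha hb hfa hconj hfb
  have hnot := not_mem_cellsF hf hb hfa (a := a)
  rw [hins, Finset.prod_insert hnot, addbox_hkZ_corner hf ha hb hfa hconj hfb]
  -- split cellsF f by row a, then column b
  have split1 : ∀ G : ℕ × ℕ → M, ∏ p ∈ cellsF f, G p
      = (∏ p ∈ (cellsF f).filter (fun p => p.1 = a), G p) *
        ((∏ p ∈ ((cellsF f).filter (fun p => ¬ p.1 = a)).filter (fun p => p.2 = b), G p) *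
          (∏ p ∈ ((cellsF f).filter (fun p => ¬ p.1 = a)).filter (fun p => ¬ p.2 = b), G p)) := by
    intro G
    rw [← Finset.prod_filter_mul_prod_filter_not (cellsF f) (fun p => p.1 = a) G,
      ← Finset.prod_filter_mul_prod_filter_not ((cellsF f).filter (fun p => ¬ p.1 = a))
        (fun p => p.2 = b) G]
  have hrow : ∀ p ∈ (cellsF f).filter (fun p => p.1 = a), F (hkZ fb p) = F (hkZ f p + 1) := by
    intro p hp
    rw [Finset.mem_filter, mem_cellsF hf] at hp
    have hpb : p.2 ≠ b := by
      have := hp.1.2.2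
      rw [hp.2] at this
      omega
    rw [addbox_hkZ hf ha hb hfa hconj hfb, if_pos hp.2, if_neg hpb, add_zero]
  have hcol : ∀ p ∈ ((cellsF f).filter (fun p => ¬ p.1 = a)).filter (fun p => p.2 = b),
      F (hkZ fb p) = F (hkZ f p + 1) := by
    intro p hp
    rw [Finset.mem_filter, Finset.mem_filter] at hp
    rw [addbox_hkZ hf ha hb hfa hconj hfb, if_neg hp.1.2, if_pos hp.2, add_zero]
  have hrest : ∀ p ∈ ((cellsF f).filter (fun p => ¬ p.1 = a)).filter (fun p => ¬ p.2 = b),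
      F (hkZ fb p) = F (hkZ f p) := by
    intro p hp
    rw [Finset.mem_filter, Finset.mem_filter] at hp
    rw [addbox_hkZ hf ha hb hfa hconj hfb, if_neg hp.1.2, if_neg hp.2, add_zero, add_zero]
  rw [split1 (fun p => F (hkZ fb p)), split1 (fun p => F (hkZ f p))]
  rw [Finset.prod_congr rfl hrow, Finset.prod_congr rfl hcol, Finset.prod_congr rfl hrest]
  rw [row_prod hf ha (fun p => F (hkZ f p + 1)), col_prod hf hb hfa hconj (fun p => F (hkZ f p + 1)),
    row_prod hf ha (fun p => F (hkZ f p)), col_prod hf hb hfa hconj (fun p => F (hkZ f p))]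
  ac_rfl

end RowCol

def SkewC (f m : ℕ → ℕ) (p : ℕ × ℕ) : Prop := InDiagram m p ∧ ¬ InDiagram f p

theorem skewC_iff {f m : ℕ → ℕ} (i j : ℕ) :
    SkewC f m (i, j) ↔ 1 ≤ i ∧ f i < j ∧ j ≤ m i := by
  unfold SkewC InDiagram
  simp only
  constructor
  · rintro ⟨⟨h1, h2, h3⟩, h4⟩
    refine ⟨h1, ?_, h3⟩
    by_contra h
    exact h4 ⟨h1, h2, by omega⟩
  · rintro ⟨h1, h2, h3⟩
    exact ⟨⟨h1, by omega, h3⟩, fun h => by omega⟩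

section Crossing

variable {f m : ℕ → ℕ}

theorem cross_col {p q : ℕ × ℕ}
    (hpath : Relation.ReflTransGen
      (fun a b => (InDiagram m a ∧ ¬ InDiagram f a) ∧
        (InDiagram m b ∧ ¬ InDiagram f b) ∧ AdjCell a b) p q)
    {j : ℕ} (hqj : j ≤ q.2) :
    p.2 < j → ∃ a, SkewC f m (a, j - 1) ∧ SkewC f m (a, j) := by
  induction hpath using Relation.ReflTransGen.head_induction_on with
  | refl => intro h; omega
  | @head s t hstep htail ih =>
    intro hpj
    obtain ⟨hsp, hsp'', hadj⟩ := hstep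
    rcases Nat.lt_or_ge t.2 j with h | h
    · exact ih h
    · rcases hadj with ⟨hrow, hcase⟩ | ⟨hcol, _⟩
      · rcases hcase with h1 | h1
        · refine ⟨s.1, ?_, ?_⟩
          · have he : (s.1, j - 1) = s := by
              have : j - 1 = s.2 := by omega
              rw [this]
            rw [he]
            exact hsp
          · have he : (s.1, j) = t := by
              have h2 : j = t.2 := by omega
              rw [h2, hrow]
            rw [he]
            exact hsp''
        · omega
      · omega

theorem cross_row {p q : ℕ × ℕ}
    (hpath : Relation.ReflTransGen
      (fun a b => (InDiagram m a ∧ ¬ InDiagram f a) ∧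
        (InDiagram m b ∧ ¬ InDiagram f b) ∧ AdjCell a b) p q)
    {i : ℕ} (hqi : i ≤ q.1) :
    p.1 < i → ∃ b, SkewC f m (i - 1, b) ∧ SkewC f m (i, b) := by
  induction hpath using Relation.ReflTransGen.head_induction_on with
  | refl => intro h; omega
  | @head s t hstep htail ih =>
    intro hpi
    obtain ⟨hsp, hsp'', hadj⟩ := hstep
    rcases Nat.lt_or_ge t.1 i with h | h
    · exact ih h
    · rcases hadj with ⟨hrow, _⟩ | ⟨hcol, hcase⟩
      · omega
      · rcases hcase with h1 | h1
        · refine ⟨s.2, ?_, ?_⟩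
          · have he : (i - 1, s.2) = s := by
              have : i - 1 = s.1 := by omega
              rw [this]
            rw [he]
            exact hsp
          · have he : (i, s.2) = t := by
              have h2 : i = t.1 := by omega
              rw [h2, hcol]
            rw [he]
            exact hsp''
        · omega
      

end Crossing

section SkewStruct

variable {f m : ℕ → ℕ}

theorem skew_col_ge (hf : IsPartition f) (hm : IsPartition m) (hsub : ∀ i, f i ≤ m i)
    {j : ℕ} (hj : 1 ≤ j) : conjP f j ≤ conjP m j := by
  rcases Nat.eq_zero_or_pos (conjP f j) with h | h
  · omega
  · have := (le_conjP_iff hf h hj).mpr le_rfl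
    exact (le_conjP_iff hm h hj).mp (le_trans this (hsub _))

-- columns below the lowest skew column agree
theorem col_low (hf : IsPartition f) (hm : IsPartition m) (hsub : ∀ i, f i ≤ m i)
    {c0 j : ℕ} (hmin : ∀ p, SkewC f m p → c0 ≤ p.2) (hj : 1 ≤ j) (hjc0 : j < c0) :
    conjP m j = conjP f j := by
  refine le_antisymm ?_ (skew_col_ge hf hm hsub hj)
  by_contra h
  push_neg at h
  set i := conjP f j + 1 with hi
  have hile : i ≤ conjP m j := by omega
  have h1 : j ≤ m i := (le_conjP_iff hm (by omega) hj).mpr hile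
  have h2 : ¬ j ≤ f i := fun hc => by
    have := (le_conjP_iff hf (by omega) hj).mp hc
    omega
  have : SkewC f m (i, j) := (skewC_iff i j).mpr ⟨by omega, by omega, h1⟩
  have := hmin _ this
  simp only at this
  omega

-- rows below the lowest skew row agree
theorem row_low (hsub : ∀ i, f i ≤ m i)
    {r0 i : ℕ} (hmin : ∀ p, SkewC f m p → r0 ≤ p.1) (hi : 1 ≤ i) (hir0 : i < r0) :
    m i = f i := by
  by_contra h
  have hlt : f i < m i := lt_of_le_of_ne (hsub i) (fun hc => h hc.symm)
  have : SkewC f m (i, f i + 1) := (skewC_iff _ _).mpr ⟨hi, by omega, by omega⟩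
  have := hmin _ this
  simp only at this
  omega

theorem row_high (hsub : ∀ i, f i ≤ m i)
    {R i : ℕ} (hmax : ∀ p, SkewC f m p → p.1 ≤ R) (hi : 1 ≤ i) (hiR : R < i) :
    m i = f i := by
  by_contra h
  have hlt : f i < m i := lt_of_le_of_ne (hsub i) (fun hc => h hc.symm)
  have : SkewC f m (i, f i + 1) := (skewC_iff _ _).mpr ⟨hi, by omega, by omega⟩
  have := hmax _ this
  simp only at this
  omega

-- middle columns: conjP m j = conjP f (j-1) + 1
theorem col_mid (hf : IsPartition f) (hm : IsPartition m)
    (hconn : ∀ p q : ℕ × ℕ,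
      (InDiagram m p ∧ ¬ InDiagram f p) → (InDiagram m q ∧ ¬ InDiagram f q) →
      Relation.ReflTransGen
        (fun a b => (InDiagram m a ∧ ¬ InDiagram f a) ∧
          (InDiagram m b ∧ ¬ InDiagram f b) ∧ AdjCell a b) p q)
    (h2x2 : ¬ ∃ i j : ℕ,
      (InDiagram m (i, j) ∧ ¬ InDiagram f (i, j)) ∧
      (InDiagram m (i + 1, j) ∧ ¬ InDiagram f (i + 1, j)) ∧
      (InDiagram m (i, j + 1) ∧ ¬ InDiagram f (i, j + 1)) ∧
      (InDiagram m (i + 1, j + 1) ∧ ¬ InDiagram f (i + 1, j + 1)))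
    {c0 j : ℕ} {p0 q0 : ℕ × ℕ} (hp0 : SkewC f m p0) (hq0 : SkewC f m q0)
    (hp0c : p0.2 = c0) (hj : c0 < j) (hjq : j ≤ q0.2) :
    conjP m j = conjP f (j - 1) + 1 := by
  have hc0 : 1 ≤ c0 := hp0c ▸ hp0.1.2.1
  have hj1 : 1 ≤ j - 1 := by omega
  have hjj : 1 ≤ j := by omega
  -- lower bound via crossing
  obtain ⟨a, ha1, ha2⟩ := cross_col (hconn p0 q0 hp0 hq0) hjq (by omega)
  rw [skewC_iff] at ha1 ha2
  have ha : 1 ≤ a := ha1.1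
  have hge : conjP f (j - 1) + 1 ≤ conjP m j := by
    have h1 : a ≤ conjP m j := (le_conjP_iff hm ha hjj).mp ha2.2.2
    have h2 : conjP f (j - 1) < a := by
      by_contra hcon
      push_neg at hcon
      have := (le_conjP_iff hf ha hj1).mpr hcon
      omega
    omega
  -- upper bound via no 2x2
  refine le_antisymm ?_ hge
  by_contra h
  push_neg at h
  set a' := conjP f (j - 1) + 1 with ha'
  have ha'1 : 1 ≤ a' := by omega
  have hm1 : j ≤ m a' := (le_conjP_iff hm ha'1 hjj).mpr (by omega)
  have hm2 : j ≤ m (a' + 1) := (le_conjP_iff hm (by omega) hjj).mpr (by omega)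
  have hf1 : f a' < j - 1 := by
    by_contra hcon
    push_neg at hcon
    have := (le_conjP_iff hf ha'1 hj1).mp hcon
    omega
  have hf2 : f (a' + 1) ≤ f a' := hf.2.1 a' ha'1
  apply h2x2
  refine ⟨a', j - 1, ?_, ?_, ?_, ?_⟩ <;>
    · rw [show ∀ x y : ℕ, (InDiagram m (x, y) ∧ ¬ InDiagram f (x, y)) = SkewC f m (x, y)
        from fun x y => rfl]
      rw [skewC_iff]
      omega

-- middle rows: m i = f (i-1) + 1
theorem row_mid (hf : IsPartition f) (hm : IsPartition m)
    (hconn : ∀ p q : ℕ × ℕ,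
      (InDiagram m p ∧ ¬ InDiagram f p) → (InDiagram m q ∧ ¬ InDiagram f q) →
      Relation.ReflTransGen
        (fun a b => (InDiagram m a ∧ ¬ InDiagram f a) ∧
          (InDiagram m b ∧ ¬ InDiagram f b) ∧ AdjCell a b) p q)
    (h2x2 : ¬ ∃ i j : ℕ,
      (InDiagram m (i, j) ∧ ¬ InDiagram f (i, j)) ∧
      (InDiagram m (i + 1, j) ∧ ¬ InDiagram f (i + 1, j)) ∧
      (InDiagram m (i, j + 1) ∧ ¬ InDiagram f (i, j + 1)) ∧
      (InDiagram m (i + 1, j + 1) ∧ ¬ InDiagram f (i + 1, j + 1)))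
    {r0 i : ℕ} {p0 q0 : ℕ × ℕ} (hp0 : SkewC f m p0) (hq0 : SkewC f m q0)
    (hp0r : p0.1 = r0) (hi : r0 < i) (hiq : i ≤ q0.1) :
    m i = f (i - 1) + 1 := by
  have hr0 : 1 ≤ r0 := hp0r ▸ hp0.1.1
  have hi1 : 1 ≤ i - 1 := by omega
  obtain ⟨b, hb1, hb2⟩ := cross_row (hconn p0 q0 hp0 hq0) hiq (by omega)
  rw [skewC_iff] at hb1 hb2
  have hge : f (i - 1) + 1 ≤ m i := by
    have := hb1.2.1
    have := hb2.2.2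
    omega
  refine le_antisymm ?_ hge
  by_contra h
  push_neg at h
  set b' := f (i - 1) + 1 with hb'
  have h1 : f i ≤ f (i - 1) := by
    have := part_mono hf hi1 (show i - 1 ≤ i by omega)
    omega
  have h2 : m (i - 1) ≥ m i := part_mono hm (by omega) (by omega)
  have hidx : i - 1 + 1 = i := by omega
  apply h2x2
  refine ⟨i - 1, b', ?_, ?_, ?_, ?_⟩ <;>
    · rw [show ∀ x y : ℕ, (InDiagram m (x, y) ∧ ¬ InDiagram f (x, y)) = SkewC f m (x, y)
        from fun x y => rfl]
      rw [skewC_iff]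
      try simp only [hidx]
      omega

end SkewStruct

theorem sum_tele (g : ℕ → ℤ) {s t : ℕ} (hst : s ≤ t) :
    ∑ i ∈ Finset.Icc (s+1) t, (g (i-1) - g i) = g s - g t := by
  induction t, hst using Nat.le_induction with
  | base =>
    rw [show Finset.Icc (s+1) s = ∅ from Finset.Icc_eq_empty (by omega)]
    simp
  | succ t hst ih =>
    rw [Finset.sum_Icc_succ_top (by omega), ih]
    have : t + 1 - 1 = t := by omega
    rw [this]
    ring

section CountE

variable {f m : ℕ → ℕ} {e : ℕ}

theorem count_e (hf : IsPartition f) (hm : IsPartition m) (hsub : ∀ i, f i ≤ m i)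
    {r0 R : ℕ} (hminr : ∀ p, SkewC f m p → r0 ≤ p.1) (hmaxr : ∀ p, SkewC f m p → p.1 ≤ R)
    (hr01 : 1 ≤ r0) (hr0R : r0 ≤ R)
    (hmid : ∀ i, r0 < i → i ≤ R → m i = f (i - 1) + 1)
    (hwt : wtP m = wtP f + e) :
    (m r0 : ℤ) - f R + R - r0 = e := by
  obtain ⟨N1, hN1⟩ := hf.2.2
  obtain ⟨N2, hN2⟩ := hm.2.2
  set N := N1 + N2 + R + 1 with hN
  have hNf : ∀ i, N ≤ i → f i = 0 := fun i hi => hN1 i (by omega)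
  have hNm : ∀ i, N ≤ i → m i = 0 := fun i hi => hN2 i (by omega)
  have hsum : (∑ i ∈ Finset.range N, ((m i : ℤ) - f i)) = e := by
    rw [Finset.sum_sub_distrib]
    have h1 : (∑ i ∈ Finset.range N, (m i : ℤ)) = ((wtP m : ℕ) : ℤ) := by
      rw [wtP_eq_sum hNm]; push_cast; ring
    have h2 : (∑ i ∈ Finset.range N, (f i : ℤ)) = ((wtP f : ℕ) : ℤ) := by
      rw [wtP_eq_sum hNf]; push_cast; ring
    rw [h1, h2, hwt]
    push_cast
    ring
  have hzero : ∀ i ∈ Finset.range N, i ∉ Finset.Icc r0 R → ((m i : ℤ) - f i) = 0 := by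
    intro i _ hi
    rw [Finset.mem_Icc] at hi
    push_neg at hi
    rcases Nat.lt_or_ge i r0 with h | h
    · rcases Nat.eq_zero_or_pos i with h0 | h0
      · subst h0; rw [hf.1, hm.1]; simp
      · rw [row_low hsub hminr h0 h]; ring
    · rw [row_high hsub hmaxr (by omega) (by omega)]; ring
  have hsub2 : Finset.Icc r0 R ⊆ Finset.range N := by
    intro i hi
    rw [Finset.mem_Icc] at hi
    rw [Finset.mem_range]
    omega
  have hsum2 : (∑ i ∈ Finset.Icc r0 R, ((m i : ℤ) - f i)) = e := by
    rw [← hsum]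
    exact Finset.sum_subset hsub2 (fun i h1 h2 => hzero i h1 h2)
  have hsplit : Finset.Icc r0 R = insert r0 (Finset.Icc (r0 + 1) R) := by
    ext i
    rw [Finset.mem_insert, Finset.mem_Icc, Finset.mem_Icc]
    omega
  rw [hsplit, Finset.sum_insert (by rw [Finset.mem_Icc]; omega)] at hsum2
  have hmids : ∀ i ∈ Finset.Icc (r0 + 1) R, ((m i : ℤ) - f i)
      = ((f (i-1) : ℤ) - f i) + 1 := by
    intro i hi
    rw [Finset.mem_Icc] at hi
    rw [hmid i (by omega) hi.2]
    push_cast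
    ring
  rw [Finset.sum_congr rfl hmids, Finset.sum_add_distrib, sum_tele (fun i => (f i : ℤ)) hr0R]
  at hsum2
  simp only [Finset.sum_const, nsmul_eq_mul, mul_one, Nat.card_Icc] at hsum2
  have : ((R + 1 - (r0 + 1) : ℕ) : ℤ) = (R : ℤ) - r0 := by omega
  rw [this] at hsum2
  omega

end CountE

theorem prod_tele {M : Type*} [CommMonoid M] (A B : ℕ → M) {c0 c : ℕ}
    (hc0 : 1 ≤ c0) (hc : c0 ≤ c)
    (hlow : ∀ j, 1 ≤ j → j < c0 → A j = B j)
    (hmid : ∀ j, c0 < j → j ≤ c → A j = B (j - 1)) :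
    ∏ j ∈ Finset.Icc 1 c, A j = A c0 * ∏ j ∈ Finset.Icc 1 (c - 1), B j := by
  have e1 : Finset.Icc 1 c = Finset.Ioc 0 c := by
    ext i; rw [Finset.mem_Icc, Finset.mem_Ioc]; omega
  have e2 : Finset.Icc 1 (c - 1) = Finset.Ioc 0 (c - 1) := by
    ext i; rw [Finset.mem_Icc, Finset.mem_Ioc]; omega
  rw [e1, e2]
  rw [← Finset.prod_Ioc_consecutive _ (show 0 ≤ c0 - 1 by omega) (show c0 - 1 ≤ c by omega)]
  rw [← Finset.prod_Ioc_consecutive _ (show 0 ≤ c0 - 1 by omega) (show c0 - 1 ≤ c - 1 by omega)]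
  have hsplit : Finset.Ioc (c0 - 1) c = insert c0 (Finset.Ioc c0 c) := by
    ext i; rw [Finset.mem_insert, Finset.mem_Ioc, Finset.mem_Ioc]; omega
  rw [hsplit, Finset.prod_insert (by rw [Finset.mem_Ioc]; omega)]
  have hlows : ∏ j ∈ Finset.Ioc 0 (c0 - 1), A j = ∏ j ∈ Finset.Ioc 0 (c0 - 1), B j := by
    apply Finset.prod_congr rfl
    intro j hj
    rw [Finset.mem_Ioc] at hj
    exact hlow j (by omega) (by omega)
  have hre : ∏ j ∈ Finset.Ioc c0 c, A j = ∏ j ∈ Finset.Ioc (c0 - 1) (c - 1), B j := by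
    apply Finset.prod_bij' (fun (j : ℕ) (_ : j ∈ Finset.Ioc c0 c) => j - 1)
      (fun (j : ℕ) (_ : j ∈ Finset.Ioc (c0 - 1) (c - 1)) => j + 1)
    · intro j hj
      rw [Finset.mem_Ioc] at hj ⊢
      omega
    · intro j hj
      rw [Finset.mem_Ioc] at hj ⊢
      omega
    · intro j hj
      rw [Finset.mem_Ioc] at hj
      omega
    · intro j hj
      rw [Finset.mem_Ioc] at hj
      omega
    · intro j hj
      rw [Finset.mem_Ioc] at hj
      exact hmid j (by omega) (by omega)
  rw [hlows, hre]
  ac_rfl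

section ZModFacts

variable {l : ℕ} [Fact l.Prime] {q : ℤ} {e : ℕ}

theorem x_ne_zero (hq : ¬ (l : ℤ) ∣ q) : ((-q : ℤ) : ZMod l) ≠ 0 := by
  intro h
  rw [ZMod.intCast_zmod_eq_zero_iff_dvd] at h
  exact hq ((dvd_neg).mp h)

theorem x_pow_e (he : e = orderOf ((-q : ℤ) : ZMod l)) :
    ((-q : ℤ) : ZMod l) ^ e = 1 := by
  rw [he]; exact pow_orderOf_eq_one _

theorem x_zpow_e (he : e = orderOf ((-q : ℤ) : ZMod l)) :
    ((-q : ℤ) : ZMod l) ^ (e : ℤ) = 1 := by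
  rw [zpow_natCast]; exact x_pow_e he

theorem one_ne_negone (hlodd : Odd l) : (1 : ZMod l) ≠ -1 := by
  intro h
  have h2 : ((2 : ℕ) : ZMod l) = 0 := by
    push_cast
    linear_combination h
  rw [ZMod.natCast_eq_zero_iff] at h2
  have hl2 : 2 ≤ l := (Fact.out : l.Prime).two_le
  have := Nat.le_of_dvd (by norm_num) h2
  rcases hlodd with ⟨k, hk⟩
  omega

theorem P_ne_zero (hlodd : Odd l) (hq : ¬ (l : ℤ) ∣ q)
    (he : e = orderOf ((-q : ℤ) : ZMod l)) (heo : Odd e) (t : ℤ) :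
    ((-q : ℤ) : ZMod l) ^ t + 1 ≠ 0 := by
  set x : ZMod l := ((-q : ℤ) : ZMod l) with hx
  have hx0 : x ≠ 0 := x_ne_zero hq
  have he0 : 0 < e := Nat.pos_of_ne_zero (by rintro rfl; exact (by norm_num : ¬ Odd 0) heo)
  intro hcon
  have hxt : x ^ t = -1 := by linear_combination hcon
  -- reduce exponent mod e
  have hdecomp : t = (e : ℤ) * (t / e) + t % e := (Int.mul_ediv_add_emod t e).symm
  have hmod : x ^ t = x ^ (t % (e : ℤ)) := by
    conv_lhs => rw [hdecomp]
    rw [zpow_add₀ hx0, zpow_mul, x_zpow_e he, one_zpow, one_mul]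
  set k : ℕ := (t % (e : ℤ)).toNat with hk
  have hk1 : (t % (e : ℤ)) = (k : ℤ) := by
    rw [hk, Int.toNat_of_nonneg (Int.emod_nonneg t (by exact_mod_cast he0.ne'))]
  have hklt : k < e := by
    have := Int.emod_lt_of_pos t (show (0:ℤ) < e by exact_mod_cast he0)
    omega
  have hxk : x ^ k = -1 := by
    rw [← zpow_natCast, ← hk1, ← hmod, hxt]
  have h2k : x ^ (2 * k) = 1 := by
    rw [two_mul, pow_add, hxk]
    ring
  have hdvd : e ∣ 2 * k := he ▸ orderOf_dvd_of_pow_eq_one h2k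
  have hcop : Nat.Coprime e 2 :=
    Nat.Coprime.symm ((Nat.Prime.coprime_iff_not_dvd Nat.prime_two).mpr
      (by rintro ⟨d, hd⟩; rcases heo with ⟨kk, hkk⟩; omega))
  have hdvdk : e ∣ k := hcop.dvd_of_dvd_mul_left hdvd
  have hk0 : k = 0 := by
    rcases Nat.eq_zero_or_pos k with h | h
    · exact h
    · exact absurd (Nat.le_of_dvd h hdvdk) (by omega)
  rw [hk0, pow_zero] at hxk
  exact one_ne_negone hlodd hxk

theorem core_identity (hlodd : Odd l) (hq : ¬ (l : ℤ) ∣ q)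
    (he : e = orderOf ((-q : ℤ) : ZMod l)) {u v : ℤ} (huv : u + v = (e : ℤ) - 1) :
    (((-q : ℤ) : ZMod l) ^ (u + 1) + 1) * (((-q : ℤ) : ZMod l) ^ (v + 1) + 1)
      = ((-q : ℤ) : ZMod l) * ((((-q : ℤ) : ZMod l) ^ u + 1) * (((-q : ℤ) : ZMod l) ^ v + 1)) := by
  set x : ZMod l := ((-q : ℤ) : ZMod l) with hx
  have hx0 : x ≠ 0 := x_ne_zero hq
  have hxyz : x * (x ^ u * x ^ v) = 1 := by
    calc x * (x ^ u * x ^ v) = x ^ (1 : ℤ) * x ^ (u + v) := by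
          rw [zpow_add₀ hx0 u v, zpow_one]
      _ = x ^ ((1 : ℤ) + (u + v)) := (zpow_add₀ hx0 1 (u + v)).symm
      _ = x ^ ((e : ℤ)) := by rw [huv, show (1 : ℤ) + ((e : ℤ) - 1) = (e : ℤ) by ring]
      _ = 1 := x_zpow_e he
  rw [zpow_add₀ hx0 u 1, zpow_add₀ hx0 v 1, zpow_one]
  linear_combination (x - 1) * hxyz

end ZModFacts

theorem RP_eq (l : ℕ) [Fact l.Prime] (q : ℤ) (g : ℕ → ℕ) :
    RP l q g = ((-q : ℤ) : ZMod l) ^ dP g *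
      (∏ i ∈ Finset.Icc 1 (wtP g), (((-q : ℤ) : ZMod l) ^ i + 1)) *
      (∏ p ∈ cellsF g, (((-q : ℤ) : ZMod l) ^ (hkZ g p) + 1))⁻¹ := by
  unfold RP
  congr 1
  exact congrArg Inv.inv (hooks_map_prod g (fun h => ((-q : ℤ) : ZMod l) ^ h + 1))


/-- Let `l` be an odd prime, `q` an integer not divisible by `l`, with
the multiplicative order `e` of `-q` modulo `l` odd.  Let `λ ⊆ μ` be partitions with `μ`
obtained from `λ` by adding an `e`-hook, `(r,c)` an addable corner of `λ` with `(r,c)`,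
`(r+1,c)`, `(r,c+1)` in the diagram of `μ` and `(r+1,c+1)` an addable corner of `μ`.
If `λ̄` is `λ` with `(r,c)` added and `μ̄` is `μ` with `(r+1,c+1)` added, then
`R_λ · R_{μ̄} = R_{λ̄} · R_μ` in `ℤ/lℤ`. -/
theorem R_mul_R_eq_of_add_corner
    (l : ℕ) [Fact l.Prime] (hlodd : Odd l) (q : ℤ) (hq : ¬ (l : ℤ) ∣ q)
    (e : ℕ) (he : e = orderOf ((-q : ℤ) : ZMod l)) (heo : Odd e)
    (f m : ℕ → ℕ) (hf : IsPartition f) (hm : IsPartition m)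
    (hhook : AddsEHook e f m)
    (r c : ℕ) (hr : 1 ≤ r) (hc : 1 ≤ c)
    (hfr : f r = c - 1) (hfc : conjP f c = r - 1)
    (hm1 : InDiagram m (r, c)) (hm2 : InDiagram m (r + 1, c)) (hm3 : InDiagram m (r, c + 1))
    (hmr : m (r + 1) = c) (hmc : conjP m (c + 1) = r)
    (fbar mbar : ℕ → ℕ)
    (hfbar : ∀ i, fbar i = if i = r then f i + 1 else f i)
    (hmbar : ∀ i, mbar i = if i = r + 1 then m i + 1 else m i) :
    RP l q f * RP l q mbar = RP l q fbar * RP l q m := by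
  obtain ⟨hsub, hwt, hconn, h2x2⟩ := hhook
  have hx0 : ((-q : ℤ) : ZMod l) ≠ 0 := x_ne_zero hq
  have hPne : ∀ t : ℤ, ((-q : ℤ) : ZMod l) ^ t + 1 ≠ 0 := P_ne_zero hlodd hq he heo
  have hmr' : m (r + 1) = (c + 1) - 1 := by omega
  have hmc' : conjP m (c + 1) = (r + 1) - 1 := by omega
  have hm1' : c ≤ m r := hm1.2.2
  have hm3' : c + 1 ≤ m r := hm3.2.2
  have hfr1 : f (r + 1) ≤ f r := hf.2.1 r hr
  -- basic skew cells
  have hskew_rc : SkewC f m (r, c) := (skewC_iff r c).mpr ⟨hr, by omega, hm1'⟩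
  have hskew_r1c : SkewC f m (r + 1, c) := (skewC_iff _ _).mpr ⟨by omega, by omega, by omega⟩
  -- row and column extreme values
  set Rowset : Set ℕ := {i | ∃ jj, SkewC f m (i, jj)} with hRowset
  have hRowne : Rowset.Nonempty := ⟨r, c, hskew_rc⟩
  obtain ⟨N2, hN2⟩ := hm.2.2
  have hRowbdd : BddAbove Rowset := by
    refine ⟨N2, ?_⟩
    rintro i ⟨jj, hij⟩
    rw [skewC_iff] at hij
    by_contra hcon
    have : m i = 0 := hN2 i (by omega)
    omega
  set r0 := sInf Rowset with hr0def
  set R := sSup Rowset with hRdef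
  obtain ⟨j0, hj0⟩ : ∃ jj, SkewC f m (r0, jj) := Nat.sInf_mem hRowne
  obtain ⟨jR, hjR⟩ : ∃ jj, SkewC f m (R, jj) := Nat.sSup_mem hRowne hRowbdd
  have hminr : ∀ p, SkewC f m p → r0 ≤ p.1 := fun p hp =>
    Nat.sInf_le ⟨p.2, by rwa [Prod.mk.eta]⟩
  have hmaxr : ∀ p, SkewC f m p → p.1 ≤ R := fun p hp =>
    le_csSup hRowbdd ⟨p.2, by rwa [Prod.mk.eta]⟩
  set Colset : Set ℕ := {j | ∃ ii, SkewC f m (ii, j)} with hColset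
  have hColne : Colset.Nonempty := ⟨c, r, hskew_rc⟩
  set c0 := sInf Colset with hc0def
  obtain ⟨i0, hi0⟩ : ∃ ii, SkewC f m (ii, c0) := Nat.sInf_mem hColne
  have hminc : ∀ p, SkewC f m p → c0 ≤ p.2 := fun p hp =>
    Nat.sInf_le ⟨p.1, by rwa [Prod.mk.eta]⟩
  have hj0s := (skewC_iff r0 j0).mp hj0
  have hjRs := (skewC_iff R jR).mp hjR
  have hi0s := (skewC_iff i0 c0).mp hi0
  have hr01 : 1 ≤ r0 := hj0s.1
  have hc01 : 1 ≤ c0 := by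
    have := hi0.1.2.1
    exact this
  have hr0r : r0 ≤ r := hminr (r, c) hskew_rc
  have hc0c : c0 ≤ c := hminc (r, c) hskew_rc
  have hrR : r + 1 ≤ R := hmaxr (r + 1, c) hskew_r1c
  have h1R : 1 ≤ R := by omega
  -- endpoint identities
  have hskewR : SkewC f m (R, f R + 1) := (skewC_iff _ _).mpr ⟨by omega, by omega, by omega⟩
  have hc0fR : c0 = f R + 1 := by
    have h1 : c0 ≤ f R + 1 := hminc _ hskewR
    have h2 : i0 ≤ R := hmaxr _ hi0
    have h3 : f R ≤ f i0 := part_mono hf hi0s.1 h2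
    have h4 : f i0 < c0 := hi0s.2.1
    omega
  have hmc0R : conjP m c0 = R := by
    have hge : R ≤ conjP m c0 := (le_conjP_iff hm h1R hc01).mp (by omega)
    refine le_antisymm ?_ hge
    by_contra hcon
    push_neg at hcon
    have h1 : c0 ≤ m (R + 1) := (le_conjP_iff hm (by omega) hc01).mpr (by omega)
    have h2 : f (R + 1) ≤ f R := part_mono hf h1R (by omega)
    have : SkewC f m (R + 1, f (R + 1) + 1) := (skewC_iff _ _).mpr ⟨by omega, by omega, by omega⟩
    have := hmaxr _ this
    simp only at this
    omega
  -- middle rows and columns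
  have hmidrow : ∀ i, r0 < i → i ≤ R → m i = f (i - 1) + 1 := fun i h1 h2 =>
    row_mid hf hm hconn h2x2 hj0 hjR rfl h1 h2
  have hmidcol : ∀ j, c0 < j → j ≤ c → conjP m j = conjP f (j - 1) + 1 := fun j h1 h2 =>
    col_mid hf hm hconn h2x2 hi0 hskew_rc rfl h1 h2
  have hlowcol : ∀ j, 1 ≤ j → j < c0 → conjP m j = conjP f j := fun j h1 h2 =>
    col_low hf hm hsub hminc h1 h2
  have hlowrow : ∀ i, 1 ≤ i → i < r0 → m i = f i := fun i h1 h2 =>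
    row_low hsub hminr h1 h2
  -- the count
  have hcount : (m r0 : ℤ) - f R + R - r0 = e :=
    count_e hf hm hsub hminr hmaxr hr01 (by omega) hmidrow hwt
  -- u and v
  set u : ℤ := (c : ℤ) - c0 + R - r with hudef
  set v : ℤ := (m r0 : ℤ) - c + r - r0 with hvdef
  have huv : u + v = (e : ℤ) - 1 := by
    rw [hudef, hvdef]
    omega
  -- hook values at the unmatched positions
  have hku : hkZ m (r + 1, c0) = u := by
    unfold hkZ
    simp only
    rw [hmr, hmc0R, hudef]
    push_cast
    ring
  have hkv : hkZ m (r0, c + 1) = v := by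
    unfold hkZ
    simp only
    rw [hmc, hvdef]
    push_cast
    ring
  -- telescoping identities
  have T1 : ∀ G : ℤ → ZMod l, ∏ j ∈ Finset.Icc 1 (m (r + 1)), G (hkZ m (r + 1, j))
      = G (hkZ m (r + 1, c0)) * ∏ j ∈ Finset.Icc 1 (f r), G (hkZ f (r, j)) := by
    intro G
    rw [hmr, hfr]
    apply prod_tele _ _ hc01 hc0c
    · intro j h1 h2
      have harg : hkZ m (r + 1, j) = hkZ f (r, j) := by
        unfold hkZ
        simp only
        rw [hmr, hfr, hlowcol j h1 h2]
        omega
      rw [harg]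
    · intro j h1 h2
      have harg : hkZ m (r + 1, j) = hkZ f (r, j - 1) := by
        unfold hkZ
        simp only
        rw [hmr, hfr, hmidcol j h1 h2]
        omega
      rw [harg]
  have T2 : ∀ G : ℤ → ZMod l, ∏ i ∈ Finset.Icc 1 (conjP m (c + 1)), G (hkZ m (i, c + 1))
      = G (hkZ m (r0, c + 1)) * ∏ i ∈ Finset.Icc 1 (conjP f c), G (hkZ f (i, c)) := by
    intro G
    rw [hmc, hfc]
    apply prod_tele _ _ hr01 hr0r
    · intro i h1 h2
      have harg : hkZ m (i, c + 1) = hkZ f (i, c) := by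
        unfold hkZ
        simp only
        rw [hmc, hfc, hlowrow i h1 h2]
        omega
      rw [harg]
    · intro i h1 h2
      have harg : hkZ m (i, c + 1) = hkZ f (i - 1, c) := by
        unfold hkZ
        simp only
        rw [hmc, hfc, hmidrow i h1 (by omega)]
        omega
      rw [harg]
  -- rewrite the goal
  rw [RP_eq l q f, RP_eq l q mbar, RP_eq l q fbar, RP_eq l q m]
  have hdfb : dP fbar = dP f + ((r : ℤ) - 1) := by
    rw [addbox_dP hf hr hc hfr hfc hfbar]; ring
  have hdmb : dP mbar = dP m + (r : ℤ) := by
    rw [addbox_dP hm (by omega) (by omega) hmr' hmc' hmbar]; push_cast; ring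
  have hwfb : wtP fbar = wtP f + 1 := addbox_wtP hf hr hc hfr hfbar
  have hwmb : wtP mbar = wtP m + 1 := addbox_wtP hm (by omega) (by omega) hmr' hmbar
  rw [hdfb, hdmb, hwfb, hwmb, zpow_add₀ hx0 (dP f), zpow_add₀ hx0 (dP m)]
  rw [Finset.prod_Icc_succ_top (show 1 ≤ wtP f + 1 by omega),
    Finset.prod_Icc_succ_top (show 1 ≤ wtP m + 1 by omega)]
  have hWterm : ((-q : ℤ) : ZMod l) ^ (wtP m + 1) = ((-q : ℤ) : ZMod l) ^ (wtP f + 1) := by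
    rw [hwt, show wtP f + e + 1 = (wtP f + 1) + e by ring, pow_add, x_pow_e he, mul_one]
  rw [hWterm]
  set x : ZMod l := ((-q : ℤ) : ZMod l) with hxdef
  -- the two add-a-box hook product relations
  have hcore : (x ^ (u + 1) + 1) * (x ^ (v + 1) + 1) = x * ((x ^ u + 1) * (x ^ v + 1)) :=
    core_identity hlodd hq he huv
  have EQ1 : (∏ p ∈ cellsF fbar, (x ^ hkZ fbar p + 1)) *
      ((∏ j ∈ Finset.Icc 1 (f r), (x ^ hkZ f (r, j) + 1)) *
        (∏ i ∈ Finset.Icc 1 (conjP f c), (x ^ hkZ f (i, c) + 1)))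
      = (x ^ (1 : ℤ) + 1) * (∏ p ∈ cellsF f, (x ^ hkZ f p + 1)) *
      ((∏ j ∈ Finset.Icc 1 (f r), (x ^ (hkZ f (r, j) + 1) + 1)) *
        (∏ i ∈ Finset.Icc 1 (conjP f c), (x ^ (hkZ f (i, c) + 1) + 1))) :=
    addbox_Hprod hf hr hc hfr hfc hfbar (fun t => x ^ t + 1)
  have EQ2 : (∏ p ∈ cellsF mbar, (x ^ hkZ mbar p + 1)) *
      ((∏ j ∈ Finset.Icc 1 (m (r + 1)), (x ^ hkZ m (r + 1, j) + 1)) *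
        (∏ i ∈ Finset.Icc 1 (conjP m (c + 1)), (x ^ hkZ m (i, c + 1) + 1)))
      = (x ^ (1 : ℤ) + 1) * (∏ p ∈ cellsF m, (x ^ hkZ m p + 1)) *
      ((∏ j ∈ Finset.Icc 1 (m (r + 1)), (x ^ (hkZ m (r + 1, j) + 1) + 1)) *
        (∏ i ∈ Finset.Icc 1 (conjP m (c + 1)), (x ^ (hkZ m (i, c + 1) + 1) + 1))) :=
    addbox_Hprod hm (by omega) (by omega) hmr' hmc' hmbar (fun t => x ^ t + 1)
  have hBf : (∏ j ∈ Finset.Icc 1 (m (r + 1)), (x ^ hkZ m (r + 1, j) + 1))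
      = (x ^ u + 1) * ∏ j ∈ Finset.Icc 1 (f r), (x ^ hkZ f (r, j) + 1) := by
    have h := T1 (fun t => x ^ t + 1)
    rw [hku] at h
    exact h
  have hBfp : (∏ j ∈ Finset.Icc 1 (m (r + 1)), (x ^ (hkZ m (r + 1, j) + 1) + 1))
      = (x ^ (u + 1) + 1) * ∏ j ∈ Finset.Icc 1 (f r), (x ^ (hkZ f (r, j) + 1) + 1) := by
    have h := T1 (fun t => x ^ (t + 1) + 1)
    rw [hku] at h
    exact h
  have hBc : (∏ i ∈ Finset.Icc 1 (conjP m (c + 1)), (x ^ hkZ m (i, c + 1) + 1))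
      = (x ^ v + 1) * ∏ i ∈ Finset.Icc 1 (conjP f c), (x ^ hkZ f (i, c) + 1) := by
    have h := T2 (fun t => x ^ t + 1)
    rw [hkv] at h
    exact h
  have hBcp : (∏ i ∈ Finset.Icc 1 (conjP m (c + 1)), (x ^ (hkZ m (i, c + 1) + 1) + 1))
      = (x ^ (v + 1) + 1) * ∏ i ∈ Finset.Icc 1 (conjP f c), (x ^ (hkZ f (i, c) + 1) + 1) := by
    have h := T2 (fun t => x ^ (t + 1) + 1)
    rw [hkv] at h
    exact h
  -- abbreviations
  set Hf := ∏ p ∈ cellsF f, (x ^ hkZ f p + 1) with hHfdef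
  set Hm := ∏ p ∈ cellsF m, (x ^ hkZ m p + 1) with hHmdef
  set Hfb := ∏ p ∈ cellsF fbar, (x ^ hkZ fbar p + 1) with hHfbdef
  set Hmb := ∏ p ∈ cellsF mbar, (x ^ hkZ mbar p + 1) with hHmbdef
  set Af := ∏ j ∈ Finset.Icc 1 (f r), (x ^ hkZ f (r, j) + 1) with hAfdef
  set Ac := ∏ i ∈ Finset.Icc 1 (conjP f c), (x ^ hkZ f (i, c) + 1) with hAcdef
  set Afp := ∏ j ∈ Finset.Icc 1 (f r), (x ^ (hkZ f (r, j) + 1) + 1) with hAfpdef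
  set Acp := ∏ i ∈ Finset.Icc 1 (conjP f c), (x ^ (hkZ f (i, c) + 1) + 1) with hAcpdef
  have hHf0 : Hf ≠ 0 := by
    rw [hHfdef]; exact Finset.prod_ne_zero_iff.mpr fun p _ => hPne _
  have hHm0 : Hm ≠ 0 := by
    rw [hHmdef]; exact Finset.prod_ne_zero_iff.mpr fun p _ => hPne _
  have hHfb0 : Hfb ≠ 0 := by
    rw [hHfbdef]; exact Finset.prod_ne_zero_iff.mpr fun p _ => hPne _
  have hHmb0 : Hmb ≠ 0 := by
    rw [hHmbdef]; exact Finset.prod_ne_zero_iff.mpr fun p _ => hPne _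
  have hAf0 : Af ≠ 0 := by
    rw [hAfdef]; exact Finset.prod_ne_zero_iff.mpr fun p _ => hPne _
  have hAc0 : Ac ≠ 0 := by
    rw [hAcdef]; exact Finset.prod_ne_zero_iff.mpr fun p _ => hPne _
  -- combined m-side relation
  have EQ2' : Hmb * (Af * Ac) = x * ((x ^ (1 : ℤ) + 1) * (Hm * (Afp * Acp))) := by
    have hcanc : ((x ^ u + 1) * (x ^ v + 1)) ≠ 0 := mul_ne_zero (hPne u) (hPne v)
    apply mul_right_cancel₀ hcanc
    rw [hBf, hBc, hBfp, hBcp] at EQ2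
    linear_combination EQ2 + ((x ^ (1 : ℤ) + 1) * Hm * (Afp * Acp)) * hcore
  have hxr : x ^ ((r : ℤ)) = x ^ ((r : ℤ) - 1) * x := by
    have h1 : x ^ ((r : ℤ)) = x ^ (((r : ℤ) - 1) + 1) := by norm_num
    rw [h1, zpow_add₀ hx0, zpow_one]
  have KEY : x ^ ((r : ℤ)) * (Hfb * Hm) = x ^ ((r : ℤ) - 1) * (Hf * Hmb) := by
    have hcanc : Af * Ac ≠ 0 := mul_ne_zero hAf0 hAc0
    apply mul_right_cancel₀ hcanc
    linear_combination (x ^ ((r : ℤ)) * Hm) * EQ1 - (x ^ ((r : ℤ) - 1) * Hf) * EQ2'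
      + (Hf * (x ^ (1 : ℤ) + 1) * Hm * (Afp * Acp)) * hxr
  have KEY3 : x ^ ((r : ℤ)) * (Hf⁻¹ * Hmb⁻¹) = x ^ ((r : ℤ) - 1) * (Hfb⁻¹ * Hm⁻¹) := by
    have KEYn : x ^ r * (Hfb * Hm) = x ^ ((r : ℤ) - 1) * (Hf * Hmb) := by
      rw [← zpow_natCast x r]; exact KEY
    field_simp
    linear_combination KEY
  linear_combination (x ^ dP f * x ^ dP m *
    (∏ i ∈ Finset.Icc 1 (wtP f), (x ^ i + 1)) *
    (∏ i ∈ Finset.Icc 1 (wtP m), (x ^ i + 1)) * (x ^ (wtP f + 1) + 1)) * KEY3
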